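/- Let m ≥ 1, α > 1, Ω = B_1(0) ⊂ ℝ^m, ψ(y) = (1−|y|)^α, and define the heat loss F(t) = ∫_{|x|>1} ∫_{B_1(0)} (4πt)^{-m/2} e^{-|x-y|²/(4t)} (1−|y|)^α dy dx. Then lim_{t↓0} F(t)/t = 0. -/

import Mathlib

open Real MeasureTheory Filter Metric
open scoped ENNReal

set_option maxHeartbeats 1000000

lemma heat_aux_ofReal_int_le {X : Type*} [MeasurableSpace X] (μ : Measure X) (f : X → ℝ)
    (hf : 0 ≤ᵐ[μ] f) : ENNReal.ofReal (∫ x, f x ∂μ) ≤ ∫⁻ x, ENNReal.ofReal (f x) ∂μ := by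
  by_cases h : Integrable f μ
  · rw [ofReal_integral_eq_lintegral_ofReal h hf]
  · rw [integral_undef h]; simp

lemma heat_jfin (m : ℕ) (hm : 1 ≤ m) {β : ℝ} (hβ1 : -1 < β) (hβ0 : β < 0) :
    ∫⁻ y in Metric.ball (0 : EuclideanSpace ℝ (Fin m)) 1,
      ENNReal.ofReal ((1 - ‖y‖) ^ β) < ⊤ := by
  haveI : Nonempty (Fin m) := ⟨⟨0, hm⟩⟩
  haveI : Nontrivial (EuclideanSpace ℝ (Fin m)) := inferInstance
  set E := EuclideanSpace ℝ (Fin m)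
  set V := volume (Metric.ball (0 : E) 1) with hVdef
  have hV : V ≠ ⊤ := measure_ball_lt_top.ne
  set c : ℝ := 2⁻¹ with hc
  have hc0 : (0:ℝ) < c := by norm_num
  have hc1 : c < 1 := by norm_num
  set A : ℕ → Set E := fun k => {y : E | c ^ (k+1) < 1 - ‖y‖ ∧ 1 - ‖y‖ ≤ c ^ k} with hA
  have hcover : Metric.ball (0 : E) 1 ⊆ ⋃ k, A k := by
    intro y hy
    have hu : 0 < 1 - ‖y‖ := by
      simp only [mem_ball, dist_zero_right] at hy; linarith
    have hu1 : 1 - ‖y‖ ≤ 1 := by have := norm_nonneg y; linarith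
    have hex : ∃ k : ℕ, c ^ k < 1 - ‖y‖ := exists_pow_lt_of_lt_one hu hc1
    classical
    set k := Nat.find hex with hk
    have hspec : c ^ k < 1 - ‖y‖ := Nat.find_spec hex
    have hkpos : k ≠ 0 := by
      intro h0
      rw [h0] at hspec; simp at hspec; linarith
    obtain ⟨j, hjk⟩ : ∃ j, k = j + 1 :=
      ⟨k - 1, (Nat.succ_pred_eq_of_pos (Nat.pos_of_ne_zero hkpos)).symm⟩
    refine Set.mem_iUnion.2 ⟨j, ?_, ?_⟩
    · rw [← hjk]; exact hspec
    · have := Nat.find_min hex (show j < k by omega)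
      exact le_of_not_gt this
  have hAmeas : ∀ k, MeasurableSet (A k) := fun k => by
    apply MeasurableSet.inter
    · exact measurableSet_lt measurable_const (measurable_const.sub measurable_norm)
    · exact measurableSet_le (measurable_const.sub measurable_norm) measurable_const
  have hterm : ∀ k : ℕ, (∫⁻ y in A k, ENNReal.ofReal ((1 - ‖y‖) ^ β)) ≤
      ENNReal.ofReal ((m : ℝ) * c ^ β * (c ^ (β + 1)) ^ k) * V := by
    intro k
    have hck : (0:ℝ) < c ^ (k+1) := pow_pos hc0 _
    have hck' : c ^ (k:ℕ) ≤ 1 := pow_le_one₀ hc0.le hc1.le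
    have hpt : ∀ y ∈ A k, ENNReal.ofReal ((1 - ‖y‖) ^ β) ≤
        ENNReal.ofReal ((c ^ (k+1)) ^ β) := by
      intro y hy
      exact ENNReal.ofReal_le_ofReal
        (Real.rpow_le_rpow_of_nonpos hck hy.1.le hβ0.le)
    have h1 : (∫⁻ y in A k, ENNReal.ofReal ((1 - ‖y‖) ^ β)) ≤
        ENNReal.ofReal ((c ^ (k+1)) ^ β) * volume (A k) := by
      calc (∫⁻ y in A k, ENNReal.ofReal ((1 - ‖y‖) ^ β))
          ≤ ∫⁻ _ in A k, ENNReal.ofReal ((c ^ (k+1)) ^ β) :=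
            setLIntegral_mono' (hAmeas k) hpt
        _ = ENNReal.ofReal ((c ^ (k+1)) ^ β) * volume (A k) := by
            rw [setLIntegral_const]
    have hsub : A k ⊆ Metric.closedBall (0:E) 1 \ Metric.ball (0:E) (1 - c ^ k) := by
      intro y hy
      obtain ⟨hy1, hy2⟩ := hy
      constructor
      · simp only [mem_closedBall, dist_zero_right]
        have := pow_pos hc0 (k+1); linarith
      · simp only [mem_ball, dist_zero_right, not_lt, Set.mem_compl_iff]
        linarith
    have hvol : volume (A k) ≤ ENNReal.ofReal ((m:ℝ) * c ^ k) * V := by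
      have h2 : volume (A k) ≤
          volume (Metric.closedBall (0:E) 1 \ Metric.ball (0:E) (1 - c ^ k)) :=
        measure_mono hsub
      have h3 : volume (Metric.closedBall (0:E) 1 \ Metric.ball (0:E) (1 - c ^ k))
          = volume (Metric.closedBall (0:E) 1) - volume (Metric.ball (0:E) (1 - c ^ k)) := by
        apply measure_diff
        · exact ball_subset_closedBall.trans
            (closedBall_subset_closedBall (by linarith [pow_pos hc0 k]))
        · exact measurableSet_ball.nullMeasurableSet
        · exact measure_ball_lt_top.ne
      have h4 : volume (Metric.closedBall (0:E) 1) = V := by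
        rw [hVdef]; exact MeasureTheory.Measure.addHaar_closedBall_eq_addHaar_ball _ _ _
      have h5 : volume (Metric.ball (0:E) (1 - c ^ k)) =
          ENNReal.ofReal ((1 - c ^ k) ^ m) * V := by
        rw [hVdef]
        have := MeasureTheory.Measure.addHaar_ball (volume : Measure E) 0
          (show (0:ℝ) ≤ 1 - c ^ k by linarith)
        rwa [finrank_euclideanSpace_fin] at this
      rw [h3, h4, h5] at h2
      refine h2.trans ?_
      have h6 : V - ENNReal.ofReal ((1 - c ^ k) ^ m) * V ≤
          (1 - ENNReal.ofReal ((1 - c ^ k) ^ m)) * V := by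
        rw [tsub_le_iff_right]
        calc V = 1 * V := (one_mul V).symm
          _ ≤ ((1 - ENNReal.ofReal ((1 - c ^ k) ^ m)) + ENNReal.ofReal ((1 - c ^ k) ^ m)) * V := by
              gcongr
              exact le_tsub_add
          _ = (1 - ENNReal.ofReal ((1 - c ^ k) ^ m)) * V
              + ENNReal.ofReal ((1 - c ^ k) ^ m) * V := by
              rw [add_mul]
      refine h6.trans ?_
      gcongr
      have h7 : (1:ℝ≥0∞) - ENNReal.ofReal ((1 - c ^ k) ^ m) =
          ENNReal.ofReal (1 - (1 - c ^ k) ^ m) := by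
        rw [ENNReal.ofReal_sub _ (pow_nonneg (by linarith) m), ENNReal.ofReal_one]
      rw [h7]
      apply ENNReal.ofReal_le_ofReal
      have hbern : 1 + (m:ℝ) * (-(c ^ k)) ≤ (1 + (-(c ^ k))) ^ m :=
        one_add_mul_le_pow (by nlinarith) m
      rw [← sub_eq_add_neg] at hbern
      nlinarith [hbern]
    calc (∫⁻ y in A k, ENNReal.ofReal ((1 - ‖y‖) ^ β))
        ≤ ENNReal.ofReal ((c ^ (k+1)) ^ β) * (ENNReal.ofReal ((m:ℝ) * c ^ k) * V) := by
          exact h1.trans (mul_le_mul_right hvol _)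
      _ = ENNReal.ofReal ((c ^ (k+1)) ^ β * ((m:ℝ) * c ^ k)) * V := by
          rw [ENNReal.ofReal_mul (by positivity), ENNReal.ofReal_mul (by positivity),
            ENNReal.ofReal_mul (by positivity)]
          ring
      _ = ENNReal.ofReal ((m : ℝ) * c ^ β * (c ^ (β + 1)) ^ k) * V := by
          congr 2
          have e1 : ((c:ℝ) ^ (k+1)) ^ β = (c ^ β) ^ k * c ^ β := by
            rw [← Real.rpow_natCast c (k+1), ← Real.rpow_natCast (c ^ β) k,
              ← Real.rpow_mul hc0.le, ← Real.rpow_mul hc0.le, ← Real.rpow_add hc0]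
            congr 1
            push_cast
            ring
          rw [e1]
          have e2 : ((c:ℝ) ^ (β+1)) ^ k = (c ^ β) ^ k * c ^ k := by
            rw [← mul_pow]
            congr 1
            rw [Real.rpow_add hc0, Real.rpow_one]
          rw [e2]
          ring
  calc (∫⁻ y in Metric.ball (0 : E) 1, ENNReal.ofReal ((1 - ‖y‖) ^ β))
      ≤ ∫⁻ y in ⋃ k, A k, ENNReal.ofReal ((1 - ‖y‖) ^ β) := lintegral_mono_set hcover
    _ ≤ ∑' k, ∫⁻ y in A k, ENNReal.ofReal ((1 - ‖y‖) ^ β) := lintegral_iUnion_le _ _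
    _ ≤ ∑' k, ENNReal.ofReal ((m : ℝ) * c ^ β * (c ^ (β + 1)) ^ k) * V :=
        ENNReal.tsum_le_tsum fun k => hterm k
    _ < ⊤ := by
        have hq : ENNReal.ofReal (c ^ (β+1)) < 1 := by
          rw [← ENNReal.ofReal_one]
          exact (ENNReal.ofReal_lt_ofReal_iff_of_nonneg (Real.rpow_nonneg hc0.le _)).mpr
            (Real.rpow_lt_one hc0.le hc1 (by linarith))
        have heq : ∀ k : ℕ, ENNReal.ofReal ((m : ℝ) * c ^ β * (c ^ (β + 1)) ^ k) * V =
            (ENNReal.ofReal ((m : ℝ) * c ^ β) * V) * (ENNReal.ofReal (c ^ (β+1))) ^ k := by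
          intro k
          rw [ENNReal.ofReal_mul (by positivity), ENNReal.ofReal_pow (Real.rpow_nonneg hc0.le _)]
          ring
        simp_rw [heq]
        rw [ENNReal.tsum_mul_left, ENNReal.tsum_geometric]
        apply ENNReal.mul_lt_top
        · exact ENNReal.mul_lt_top ENNReal.ofReal_lt_top hV.lt_top
        · rw [lt_top_iff_ne_top]
          apply ENNReal.inv_ne_top.2
          simp only [ne_eq, tsub_eq_zero_iff_le, not_le]
          exact hq


lemma heat_main_bound (m : ℕ) (hm : 1 ≤ m) (α : ℝ) (hα : 1 < α) :
    ∃ c p : ℝ, 1 < p ∧ 0 ≤ c ∧ ∀ t : ℝ, 0 < t →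
      (∫ x in {x : EuclideanSpace ℝ (Fin m) | 1 < ‖x‖},
        ∫ y in Metric.ball (0 : EuclideanSpace ℝ (Fin m)) 1,
          (4 * Real.pi * t) ^ (-(m : ℝ) / 2) * Real.exp (-(dist x y) ^ 2 / (4 * t))
            * (1 - ‖y‖) ^ α) ≤ c * t ^ p := by
  classical
  haveI : Nonempty (Fin m) := ⟨⟨0, hm⟩⟩
  set E := EuclideanSpace ℝ (Fin m)
  set α' : ℝ := min α 2 with hα'def
  have hα'1 : 1 < α' := lt_min hα one_lt_two
  have hα'2 : α' ≤ 2 := min_le_right _ _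
  have hα'le : α' ≤ α := min_le_left _ _
  set p : ℝ := (α' + 3) / 4 with hpdef
  have hp1 : 1 < p := by rw [hpdef]; linarith
  have hp2 : p ≤ 2 := by rw [hpdef]; linarith
  set β : ℝ := α' - 2 * p with hβdef
  have hβ1 : -1 < β := by rw [hβdef, hpdef]; linarith
  have hβ0 : β < 0 := by rw [hβdef, hpdef]; linarith
  set S : Set E := {x : E | 1 < ‖x‖} with hSdef
  have hS : MeasurableSet S := (isOpen_lt continuous_const continuous_norm).measurableSet
  set B : Set E := Metric.ball (0 : E) 1 with hBdef
  set J : ℝ≥0∞ := ∫⁻ y in B, ENNReal.ofReal ((1 - ‖y‖) ^ β) with hJdef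
  have hJ : J ≠ ⊤ := (heat_jfin m hm hβ1 hβ0).ne
  set D : ℝ≥0∞ := ENNReal.ofReal ((2:ℝ) ^ ((m:ℝ)/2)) * J with hDdef
  have hD : D ≠ ⊤ := ENNReal.mul_ne_top ENNReal.ofReal_ne_top hJ
  refine ⟨5 * 8 ^ p * D.toReal, p, hp1, by positivity, fun t ht => ?_⟩
  set ct : ℝ := (4 * Real.pi * t) ^ (-(m : ℝ) / 2) with hctdef
  have hct : 0 < ct := Real.rpow_pos_of_pos (by positivity) _
  set k : E → E → ℝ := fun x y =>
    ct * Real.exp (-(dist x y) ^ 2 / (4 * t)) * (1 - ‖y‖) ^ α with hkdef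
  have hknn : ∀ x : E, ∀ y ∈ B, 0 ≤ k x y := by
    intro x y hy
    have hy' : ‖y‖ < 1 := by simpa [hBdef, mem_ball, dist_zero_right] using hy
    have : (0:ℝ) ≤ (1 - ‖y‖) ^ α := Real.rpow_nonneg (by linarith) _
    positivity
  -- pointwise bound
  have hpoint : ∀ x ∈ S, ∀ y ∈ B, k x y ≤
      (5 * 8 ^ p * t ^ p) * (ct * Real.exp (-(dist x y) ^ 2 / (8 * t)) * (1 - ‖y‖) ^ β) := by
    intro x hx y hy
    have hx' : 1 < ‖x‖ := hx
    have hy' : ‖y‖ < 1 := by simpa [hBdef, mem_ball, dist_zero_right] using hy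
    set u : ℝ := 1 - ‖y‖ with hudef
    set d : ℝ := dist x y with hddef
    have hu0 : 0 < u := by rw [hudef]; linarith
    have hu1 : u ≤ 1 := by rw [hudef]; have := norm_nonneg y; linarith
    have hd0 : 0 ≤ d := dist_nonneg
    have hud : u ≤ d := by
      have h1 : ‖x‖ - ‖y‖ ≤ ‖x - y‖ := norm_sub_norm_le x y
      have h2 : d = ‖x - y‖ := dist_eq_norm x y
      rw [hudef, h2]; linarith
    have hstep1 : (1 - ‖y‖) ^ α ≤ u ^ α' :=
      Real.rpow_le_rpow_of_exponent_ge hu0 hu1 hα'le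
    have hstep2 : Real.exp (-d ^ 2 / (4 * t)) =
        Real.exp (-d ^ 2 / (8 * t)) * Real.exp (-d ^ 2 / (8 * t)) := by
      rw [← Real.exp_add]
      congr 1
      field_simp
      ring
    have hstep3 : Real.exp (-d ^ 2 / (8 * t)) ≤ Real.exp (-u ^ 2 / (8 * t)) := by
      apply Real.exp_le_exp.2
      have hsq : u ^ 2 ≤ d ^ 2 := by nlinarith
      apply (div_le_div_iff_of_pos_right (by linarith : (0:ℝ) < 8 * t)).2
      linarith
    -- the key one-variable estimate
    set v : ℝ := u ^ 2 / (8 * t) with hvdef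
    have hv0 : 0 ≤ v := by positivity
    have hvp : v ^ p ≤ v + v ^ 2 := by
      rcases eq_or_lt_of_le hv0 with h0 | h0
      · rw [← h0, Real.zero_rpow (by linarith : p ≠ 0)]; norm_num
      · rcases le_or_gt v 1 with h1 | h1
        · have := Real.rpow_le_rpow_of_exponent_ge h0 h1 hp1.le
          rw [Real.rpow_one] at this
          nlinarith
        · have h2 := Real.rpow_le_rpow_of_exponent_le h1.le hp2
          rw [show ((2:ℝ)) = ((2:ℕ):ℝ) by norm_num, Real.rpow_natCast] at h2
          nlinarith
    have hev : (v + v ^ 2) * Real.exp (-v) ≤ 5 := by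
      have h1 : v ≤ Real.exp v := by
        have := Real.add_one_le_exp v; linarith
      have h2 : v ^ 2 ≤ 4 * Real.exp v := by
        have ha := Real.add_one_le_exp (v / 2)
        have hb : (v / 2) ^ 2 ≤ (Real.exp (v / 2)) ^ 2 := by
          apply pow_le_pow_left₀ (by positivity) (by linarith)
        have hc : (Real.exp (v / 2)) ^ 2 = Real.exp v := by
          rw [sq, ← Real.exp_add]; ring_nf
        nlinarith
      calc (v + v ^ 2) * Real.exp (-v) ≤ (5 * Real.exp v) * Real.exp (-v) := by
            apply mul_le_mul_of_nonneg_right _ (Real.exp_nonneg _)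
            linarith
        _ = 5 := by rw [mul_assoc, ← Real.exp_add]; simp
    have hvpe : v ^ p * Real.exp (-v) ≤ 5 :=
      le_trans (mul_le_mul_of_nonneg_right hvp (Real.exp_nonneg _)) hev
    have huv : u ^ (2 * p) = (8 * t) ^ p * v ^ p := by
      have h8 : u ^ 2 = (8 * t) * v := by
        rw [hvdef]; field_simp
      calc u ^ (2 * p) = (u ^ (2:ℝ)) ^ p := by
            rw [← Real.rpow_mul hu0.le]
        _ = (u ^ 2) ^ p := by
            rw [show ((2:ℝ)) = ((2:ℕ):ℝ) by norm_num, Real.rpow_natCast]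
        _ = ((8 * t) * v) ^ p := by rw [h8]
        _ = (8 * t) ^ p * v ^ p := Real.mul_rpow (by positivity) hv0
    have hαsplit : u ^ α' = u ^ β * u ^ (2 * p) := by
      rw [← Real.rpow_add hu0]
      congr 1
      rw [hβdef]; ring
    have hexpv : Real.exp (-u ^ 2 / (8 * t)) = Real.exp (-v) := by
      congr 1
      rw [hvdef]; ring
    have hkey : u ^ α' * Real.exp (-u ^ 2 / (8 * t)) ≤ 5 * (8 * t) ^ p * u ^ β := by
      calc u ^ α' * Real.exp (-u ^ 2 / (8 * t))
          = u ^ β * ((8 * t) ^ p * (v ^ p * Real.exp (-v))) := by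
            rw [hαsplit, huv, hexpv]; ring
        _ ≤ u ^ β * ((8 * t) ^ p * 5) := by
            apply mul_le_mul_of_nonneg_left _ (Real.rpow_nonneg hu0.le _)
            apply mul_le_mul_of_nonneg_left hvpe (by positivity)
        _ = 5 * (8 * t) ^ p * u ^ β := by ring
    -- combine
    have h8t : (8 * t) ^ p = 8 ^ p * t ^ p := Real.mul_rpow (by norm_num) ht.le
    calc k x y = ct * Real.exp (-d ^ 2 / (4 * t)) * (1 - ‖y‖) ^ α := rfl
      _ ≤ ct * Real.exp (-d ^ 2 / (4 * t)) * u ^ α' := by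
          apply mul_le_mul_of_nonneg_left hstep1 (by positivity)
      _ = ct * Real.exp (-d ^ 2 / (8 * t)) * (u ^ α' * Real.exp (-d ^ 2 / (8 * t))) := by
          rw [hstep2]; ring
      _ ≤ ct * Real.exp (-d ^ 2 / (8 * t)) * (u ^ α' * Real.exp (-u ^ 2 / (8 * t))) := by
          apply mul_le_mul_of_nonneg_left _ (by positivity)
          apply mul_le_mul_of_nonneg_left hstep3 (Real.rpow_nonneg hu0.le _)
      _ ≤ ct * Real.exp (-d ^ 2 / (8 * t)) * (5 * (8 * t) ^ p * u ^ β) := by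
          apply mul_le_mul_of_nonneg_left hkey (by positivity)
      _ = (5 * 8 ^ p * t ^ p) * (ct * Real.exp (-d ^ 2 / (8 * t)) * u ^ β) := by
          rw [h8t]; ring
  -- measurability of the dominating kernel
  have hgmeas : Measurable (fun z : E × E =>
      ENNReal.ofReal (ct * Real.exp (-(dist z.1 z.2) ^ 2 / (8 * t)) * (1 - ‖z.2‖) ^ β)) := by
    fun_prop
  -- the lintegral chain
  set L : ℝ≥0∞ := ∫⁻ x in S, ∫⁻ y in B, ENNReal.ofReal (k x y) with hLdef
  have hchain1 : ENNReal.ofReal (∫ x in S, ∫ y in B, k x y) ≤ L := by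
    refine le_trans (heat_aux_ofReal_int_le _ _ ?_) (lintegral_mono fun x => ?_)
    · exact ae_of_all _ fun x => setIntegral_nonneg measurableSet_ball (hknn x)
    · refine heat_aux_ofReal_int_le _ _ ?_
      exact (ae_restrict_iff' measurableSet_ball).2 (ae_of_all _ (hknn x))
  set G : ℝ≥0∞ := ∫⁻ x in S, ∫⁻ y in B,
      ENNReal.ofReal (ct * Real.exp (-(dist x y) ^ 2 / (8 * t)) * (1 - ‖y‖) ^ β) with hGdef
  have hchain2 : L ≤ ENNReal.ofReal (5 * 8 ^ p * t ^ p) * G := by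
    have hmono : L ≤ ∫⁻ x in S, ∫⁻ y in B, ENNReal.ofReal (5 * 8 ^ p * t ^ p) *
        ENNReal.ofReal (ct * Real.exp (-(dist x y) ^ 2 / (8 * t)) * (1 - ‖y‖) ^ β) := by
      refine setLIntegral_mono' hS fun x hx => ?_
      refine setLIntegral_mono' measurableSet_ball fun y hy => ?_
      rw [← ENNReal.ofReal_mul (by positivity)]
      exact ENNReal.ofReal_le_ofReal (hpoint x hx y hy)
    refine hmono.trans_eq ?_
    rw [hGdef]
    rw [← lintegral_const_mul' _ _ ENNReal.ofReal_ne_top]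
    congr 1
    ext x
    rw [← lintegral_const_mul' _ _ ENNReal.ofReal_ne_top]
  have hswap : G = ∫⁻ y in B, ∫⁻ x in S,
      ENNReal.ofReal (ct * Real.exp (-(dist x y) ^ 2 / (8 * t)) * (1 - ‖y‖) ^ β) := by
    rw [hGdef]
    exact lintegral_lintegral_swap hgmeas.aemeasurable
  -- gaussian integral bound for the inner integral
  have hgauss : ∀ y : E, (∫⁻ x in S, ENNReal.ofReal (Real.exp (-(dist x y) ^ 2 / (8 * t))))
      ≤ ENNReal.ofReal ((8 * Real.pi * t) ^ ((m:ℝ)/2)) := by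
    intro y
    have hb : (0:ℝ) < 1 / (8 * t) := by positivity
    have hint : Integrable (fun v : E => Real.exp (-(1 / (8 * t)) * ‖v‖ ^ 2)) := by
      have h := (GaussianFourier.integrable_cexp_neg_mul_sq_norm_add (V := E)
        (show 0 < ((1 / (8 * t) : ℝ):ℂ).re by simpa using hb) 0 0).norm
      refine h.congr (Filter.Eventually.of_forall fun v => ?_)
      simp [Complex.norm_exp, ← Complex.ofReal_pow]
    calc (∫⁻ x in S, ENNReal.ofReal (Real.exp (-(dist x y) ^ 2 / (8 * t))))
        ≤ ∫⁻ x, ENNReal.ofReal (Real.exp (-(dist x y) ^ 2 / (8 * t))) :=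
          setLIntegral_le_lintegral _ _
      _ = ∫⁻ x, ENNReal.ofReal (Real.exp (-(1 / (8 * t)) * ‖x - y‖ ^ 2)) := by
          congr 1
          ext x
          rw [dist_eq_norm]
          congr 2
          ring
      _ = ∫⁻ x, ENNReal.ofReal (Real.exp (-(1 / (8 * t)) * ‖x‖ ^ 2)) := by
          have := lintegral_add_right_eq_self (μ := (volume : Measure E))
            (fun z : E => ENNReal.ofReal (Real.exp (-(1 / (8 * t)) * ‖z‖ ^ 2))) (-y)
          simp only [← sub_eq_add_neg] at this
          exact this
      _ = ENNReal.ofReal (∫ x : E, Real.exp (-(1 / (8 * t)) * ‖x‖ ^ 2)) := by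
          rw [ofReal_integral_eq_lintegral_ofReal hint
            (ae_of_all _ fun x => Real.exp_nonneg _)]
      _ = ENNReal.ofReal ((8 * Real.pi * t) ^ ((m:ℝ)/2)) := by
          rw [GaussianFourier.integral_rexp_neg_mul_sq_norm hb, finrank_euclideanSpace_fin]
          congr 2
          · field_simp
  -- inner integral bound
  have hinner : ∀ y ∈ B, (∫⁻ x in S,
      ENNReal.ofReal (ct * Real.exp (-(dist x y) ^ 2 / (8 * t)) * (1 - ‖y‖) ^ β))
      ≤ ENNReal.ofReal ((2:ℝ) ^ ((m:ℝ)/2)) * ENNReal.ofReal ((1 - ‖y‖) ^ β) := by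
    intro y hy
    have hy' : ‖y‖ < 1 := by simpa [hBdef, mem_ball, dist_zero_right] using hy
    have hu0 : (0:ℝ) < 1 - ‖y‖ := by linarith
    have heq : ∀ x : E, ENNReal.ofReal (ct * Real.exp (-(dist x y) ^ 2 / (8 * t)) * (1 - ‖y‖) ^ β)
        = ENNReal.ofReal (ct * (1 - ‖y‖) ^ β) *
          ENNReal.ofReal (Real.exp (-(dist x y) ^ 2 / (8 * t))) := by
      intro x
      rw [← ENNReal.ofReal_mul (by positivity)]
      congr 1
      ring
    calc (∫⁻ x in S,
        ENNReal.ofReal (ct * Real.exp (-(dist x y) ^ 2 / (8 * t)) * (1 - ‖y‖) ^ β))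
        = ENNReal.ofReal (ct * (1 - ‖y‖) ^ β) *
          ∫⁻ x in S, ENNReal.ofReal (Real.exp (-(dist x y) ^ 2 / (8 * t))) := by
          simp_rw [heq]
          exact lintegral_const_mul' _ _ ENNReal.ofReal_ne_top
      _ ≤ ENNReal.ofReal (ct * (1 - ‖y‖) ^ β) *
          ENNReal.ofReal ((8 * Real.pi * t) ^ ((m:ℝ)/2)) :=
          mul_le_mul_right (hgauss y) _
      _ = ENNReal.ofReal ((2:ℝ) ^ ((m:ℝ)/2)) * ENNReal.ofReal ((1 - ‖y‖) ^ β) := by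
          rw [← ENNReal.ofReal_mul (by positivity), ← ENNReal.ofReal_mul (by positivity)]
          congr 1
          have hc : ct * (8 * Real.pi * t) ^ ((m:ℝ)/2) = (2:ℝ) ^ ((m:ℝ)/2) := by
            rw [hctdef]
            have h4 : (0:ℝ) < 4 * Real.pi * t := by positivity
            have h8 : (0:ℝ) < 8 * Real.pi * t := by positivity
            rw [show (-(m : ℝ) / 2) = -((m:ℝ)/2) by ring, Real.rpow_neg h4.le]
            rw [inv_mul_eq_div, ← Real.div_rpow h8.le h4.le]
            congr 1
            field_simp
            ring
          calc ct * (1 - ‖y‖) ^ β * (8 * Real.pi * t) ^ ((m:ℝ)/2)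
              = (ct * (8 * Real.pi * t) ^ ((m:ℝ)/2)) * (1 - ‖y‖) ^ β := by ring
            _ = (2:ℝ) ^ ((m:ℝ)/2) * (1 - ‖y‖) ^ β := by rw [hc]
  have hchain3 : G ≤ D := by
    rw [hswap, hDdef, hJdef]
    calc (∫⁻ y in B, ∫⁻ x in S,
        ENNReal.ofReal (ct * Real.exp (-(dist x y) ^ 2 / (8 * t)) * (1 - ‖y‖) ^ β))
        ≤ ∫⁻ y in B, ENNReal.ofReal ((2:ℝ) ^ ((m:ℝ)/2)) * ENNReal.ofReal ((1 - ‖y‖) ^ β) :=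
          setLIntegral_mono' measurableSet_ball hinner
      _ = ENNReal.ofReal ((2:ℝ) ^ ((m:ℝ)/2)) * ∫⁻ y in B, ENNReal.ofReal ((1 - ‖y‖) ^ β) :=
          lintegral_const_mul' _ _ ENNReal.ofReal_ne_top
  -- put everything together
  have htot : ENNReal.ofReal (∫ x in S, ∫ y in B, k x y) ≤
      ENNReal.ofReal (5 * 8 ^ p * t ^ p) * D := by
    refine hchain1.trans (hchain2.trans ?_)
    exact mul_le_mul_right hchain3 _
  have hfin : ENNReal.ofReal (5 * 8 ^ p * t ^ p) * D ≠ ⊤ :=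
    ENNReal.mul_ne_top ENNReal.ofReal_ne_top hD
  have hFnn : 0 ≤ ∫ x in S, ∫ y in B, k x y :=
    setIntegral_nonneg hS fun x _ => setIntegral_nonneg measurableSet_ball (hknn x)
  have hfinal : (∫ x in S, ∫ y in B, k x y) ≤ 5 * 8 ^ p * D.toReal * t ^ p := by
    have h1 : (∫ x in S, ∫ y in B, k x y) =
        (ENNReal.ofReal (∫ x in S, ∫ y in B, k x y)).toReal := by
      rw [ENNReal.toReal_ofReal hFnn]
    rw [h1]
    calc (ENNReal.ofReal (∫ x in S, ∫ y in B, k x y)).toReal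
        ≤ (ENNReal.ofReal (5 * 8 ^ p * t ^ p) * D).toReal := ENNReal.toReal_mono hfin htot
      _ = (5 * 8 ^ p * t ^ p) * D.toReal := by
          rw [ENNReal.toReal_mul, ENNReal.toReal_ofReal (by positivity)]
      _ = 5 * 8 ^ p * D.toReal * t ^ p := by ring
  exact hfinal

theorem heat_loss_right_derivative_zero (m : ℕ) (hm : 1 ≤ m) (α : ℝ) (hα : 1 < α)
    (F : ℝ → ℝ)
    (hF : ∀ t : ℝ, F t = ∫ x in {x : EuclideanSpace ℝ (Fin m) | 1 < ‖x‖},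
        ∫ y in Metric.ball (0 : EuclideanSpace ℝ (Fin m)) 1,
          (4 * Real.pi * t) ^ (-(m : ℝ) / 2) * Real.exp (-(dist x y) ^ 2 / (4 * t))
            * (1 - ‖y‖) ^ α) :
    Tendsto (fun t : ℝ => F t / t) (nhdsWithin 0 (Set.Ioi 0)) (nhds 0) := by
  obtain ⟨c, p, hp1, hc0, hbound⟩ := heat_main_bound m hm α hα
  have hS : MeasurableSet {x : EuclideanSpace ℝ (Fin m) | 1 < ‖x‖} :=
    (isOpen_lt continuous_const continuous_norm).measurableSet
  have hFnn : ∀ t : ℝ, 0 < t → 0 ≤ F t := by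
    intro t ht
    rw [hF t]
    refine setIntegral_nonneg hS fun x _ => setIntegral_nonneg measurableSet_ball fun y hy => ?_
    have hy' : ‖y‖ < 1 := by simpa [mem_ball, dist_zero_right] using hy
    have h1 : (0:ℝ) ≤ (1 - ‖y‖) ^ α := Real.rpow_nonneg (by linarith) _
    have h2 : (0:ℝ) < (4 * Real.pi * t) ^ (-(m : ℝ) / 2) :=
      Real.rpow_pos_of_pos (by positivity) _
    positivity
  apply squeeze_zero' (g := fun t : ℝ => c * t ^ (p - 1))
  · filter_upwards [self_mem_nhdsWithin] with t ht
    exact div_nonneg (hFnn t ht) (le_of_lt ht)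
  · filter_upwards [self_mem_nhdsWithin] with t ht
    have ht : (0:ℝ) < t := ht
    have h1 : F t ≤ c * t ^ p := by rw [hF t]; exact hbound t ht
    have h2 : t ^ (p - 1) * t = t ^ p := by
      rw [Real.rpow_sub ht, Real.rpow_one]
      field_simp
    rw [div_le_iff₀ ht]
    calc F t ≤ c * t ^ p := h1
      _ = c * t ^ (p - 1) * t := by rw [← h2]; ring
  · have h0 : Tendsto (fun t : ℝ => t ^ (p - 1)) (nhdsWithin 0 (Set.Ioi 0)) (nhds 0) := by
      have hcont := (Real.continuousAt_rpow_const 0 (p - 1) (Or.inr (by linarith))).tendsto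
      rw [Real.zero_rpow (by linarith : p - 1 ≠ 0)] at hcont
      exact hcont.mono_left nhdsWithin_le_nhds
    simpa using h0.const_mul c
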